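/- Let A be a matrix with n columns, H ∈ ℝ^{n×n} a normalized Walsh–Hadamard matrix, and D ∈ ℝ^{n×n} a diagonal matrix whose diagonal entries are independent Rademacher (±1) random variables. Then for every t ≥ 0, with probability at least 1 − n·e^{−t²/8}, every column of A D Hᵀ has Euclidean norm at most n^{−1/2}‖A‖_F + t n^{−1/2}‖A‖₂. -/

import Mathlib

open Matrix

/-- Spectral norm (largest singular value) of a real matrix. -/
noncomputable def specNorm {m n : ℕ} (A : Matrix (Fin m) (Fin n) ℝ) : ℝ :=
  ‖LinearMap.toContinuousLinearMap (Matrix.toEuclideanLin A)‖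

/-- Frobenius norm of a real matrix. -/
noncomputable def frobNorm {m n : ℕ} (A : Matrix (Fin m) (Fin n) ℝ) : ℝ :=
  Real.sqrt (∑ i, ∑ j, (A i j) ^ 2)

/-- Euclidean norm of a vector in `ℝ^n`. -/
noncomputable def vnorm {n : ℕ} (v : Fin n → ℝ) : ℝ :=
  Real.sqrt (∑ i, (v i) ^ 2)

/-- The sign vector `±1` associated with a Boolean vector. -/
def signVec {n : ℕ} (s : Fin n → Bool) : Fin n → ℝ :=
  fun i => if s i then 1 else -1


open Real Finset

section SRHTProof

/-- two-term log-sum inequality -/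
lemma two_log_sum {a1 a2 b1 b2 : ℝ} (ha1 : 0 < a1) (ha2 : 0 < a2)
    (hb1 : 0 < b1) (hb2 : 0 < b2) :
    (a1 + a2) * Real.log ((a1 + a2) / (b1 + b2)) ≤
      a1 * Real.log (a1 / b1) + a2 * Real.log (a2 / b2) := by
  have hs : 0 < a1 + a2 := by linarith
  have htt : 0 < b1 + b2 := by linarith
  have key : ∀ a b : ℝ, 0 < a → 0 < b →
      a - b * ((a1 + a2) / (b1 + b2)) ≤
        a * Real.log (a / b) - a * Real.log ((a1 + a2) / (b1 + b2)) := by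
    intro a b ha hb
    have hx : 0 < (a / b) / ((a1 + a2) / (b1 + b2)) := by positivity
    have h1 := Real.one_sub_inv_le_log_of_pos hx
    have hlog : Real.log ((a / b) / ((a1 + a2) / (b1 + b2)))
        = Real.log (a / b) - Real.log ((a1 + a2) / (b1 + b2)) := by
      rw [Real.log_div (by positivity) (by positivity)]
    rw [hlog] at h1
    have h2 : a * (1 - ((a / b) / ((a1 + a2) / (b1 + b2)))⁻¹)
        ≤ a * (Real.log (a / b) - Real.log ((a1 + a2) / (b1 + b2))) :=
      mul_le_mul_of_nonneg_left h1 ha.le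
    have h3 : a * (1 - ((a / b) / ((a1 + a2) / (b1 + b2)))⁻¹)
        = a - b * ((a1 + a2) / (b1 + b2)) := by
      field_simp
    rw [h3] at h2; linarith [h2]
  have k1 := key a1 b1 ha1 hb1
  have k2 := key a2 b2 ha2 hb2
  have hsum : (a1 - b1 * ((a1 + a2) / (b1 + b2))) + (a2 - b2 * ((a1 + a2) / (b1 + b2))) = 0 := by
    field_simp
    ring
  nlinarith [k1, k2]

/-- two-point entropy functional (uniform measure on two points, unnormalized by 2) -/
noncomputable def Dent (y z : ℝ) : ℝ :=
  (y * Real.log y + z * Real.log z) / 2 - ((y + z) / 2) * Real.log ((y + z) / 2)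

lemma Dent_comm (y z : ℝ) : Dent y z = Dent z y := by
  unfold Dent; rw [add_comm y z]; ring_nf

lemma Dent_eq (y z : ℝ) (hy : 0 < y) (hz : 0 < z) :
    Dent y z = (y * Real.log (y / (y + z)) + z * Real.log (z / (y + z))) / 2
      + ((y + z) / 2) * Real.log 2 := by
  have hyz : 0 < y + z := by linarith
  unfold Dent
  rw [Real.log_div hy.ne' hyz.ne', Real.log_div hz.ne' hyz.ne',
    Real.log_div hyz.ne' (by norm_num)]
  ring

lemma Dent_midpoint {y1 y2 z1 z2 : ℝ} (hy1 : 0 < y1) (hy2 : 0 < y2)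
    (hz1 : 0 < z1) (hz2 : 0 < z2) :
    Dent ((y1 + y2) / 2) ((z1 + z2) / 2) ≤ (Dent y1 z1 + Dent y2 z2) / 2 := by
  have h1 := two_log_sum (a1 := y1) (a2 := y2) (b1 := y1 + z1) (b2 := y2 + z2)
    hy1 hy2 (by linarith) (by linarith)
  have h2 := two_log_sum (a1 := z1) (a2 := z2) (b1 := y1 + z1) (b2 := y2 + z2)
    hz1 hz2 (by linarith) (by linarith)
  rw [Dent_eq _ _ (by linarith) (by linarith), Dent_eq _ _ hy1 hz1, Dent_eq _ _ hy2 hz2]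
  have e1 : (y1 + y2) / 2 / ((y1 + y2) / 2 + (z1 + z2) / 2)
      = (y1 + y2) / (y1 + z1 + (y2 + z2)) := by
    rw [← add_div]
    rw [div_div_div_cancel_right₀]
    · ring_nf
    · norm_num
  have e2 : (z1 + z2) / 2 / ((y1 + y2) / 2 + (z1 + z2) / 2)
      = (z1 + z2) / (y1 + z1 + (y2 + z2)) := by
    rw [← add_div]
    rw [div_div_div_cancel_right₀]
    · ring_nf
    · norm_num
  rw [e1, e2]
  nlinarith [h1, h2]

/-- key analytic inequality -/
lemma key_analytic {d : ℝ} (hd : 0 ≤ d) :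
    (d / 2) * Real.exp d - ((Real.exp d + 1) / 2) * Real.log ((Real.exp d + 1) / 2)
      ≤ (d ^ 2 / 4) * Real.exp d := by
  set φ : ℝ → ℝ := fun d => (d ^ 2 / 4) * Real.exp d
    + ((Real.exp d + 1) / 2) * Real.log ((Real.exp d + 1) / 2) - (d / 2) * Real.exp d with hφ
  have hder : ∀ x : ℝ, HasDerivAt φ
      (Real.exp x * (x ^ 2 / 4 + Real.log ((Real.exp x + 1) / 2) / 2)) x := by
    intro x
    have hpos : (0:ℝ) < (Real.exp x + 1) / 2 := by positivity
    have h1 : HasDerivAt (fun x : ℝ => (x ^ 2 / 4) * Real.exp x)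
        ((x / 2) * Real.exp x + (x ^ 2 / 4) * Real.exp x) x := by
      have := ((hasDerivAt_pow 2 x).div_const 4).mul (Real.hasDerivAt_exp x)
      refine this.congr_deriv ?_; ring
    have h2 : HasDerivAt (fun x : ℝ => (Real.exp x + 1) / 2)
        (Real.exp x / 2) x := ((Real.hasDerivAt_exp x).add_const 1).div_const 2
    have h3 : HasDerivAt (fun x : ℝ => ((Real.exp x + 1) / 2) * Real.log ((Real.exp x + 1) / 2))
        ((Real.exp x / 2) * Real.log ((Real.exp x + 1) / 2)
          + ((Real.exp x + 1) / 2) * ((Real.exp x / 2) / ((Real.exp x + 1) / 2))) x := by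
      exact h2.mul (h2.log hpos.ne')
    have h4 : HasDerivAt (fun x : ℝ => (x / 2) * Real.exp x)
        ((1 / 2) * Real.exp x + (x / 2) * Real.exp x) x := by
      have := ((hasDerivAt_id x).div_const 2).mul (Real.hasDerivAt_exp x)
      refine this.congr_deriv ?_
      rfl
    have := (h1.add h3).sub h4
    refine this.congr_deriv ?_
    field_simp
    ring
  have hmono : MonotoneOn φ (Set.Ici (0:ℝ)) := by
    apply monotoneOn_of_deriv_nonneg (convex_Ici 0)
    · exact Continuous.continuousOn (by
        fun_prop (disch := intro x; positivity))
    · intro x hx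
      exact (hder x).differentiableAt.differentiableWithinAt
    · intro x hx
      rw [(hder x).deriv]
      have : (0:ℝ) ≤ Real.log ((Real.exp x + 1) / 2) := by
        apply Real.log_nonneg
        simp at hx
        nlinarith [Real.one_le_exp hx.le]
      positivity
  have h0 : φ 0 = 0 := by simp [hφ]
  have := hmono (Set.self_mem_Ici) (Set.mem_Ici.2 hd) hd
  rw [h0] at this
  simp only [hφ] at this
  linarith

/-- two-point entropy bound for exponentials -/
lemma Dent_exp_le (u v : ℝ) :
    Dent (Real.exp u) (Real.exp v) ≤
      (max (u - v) 0) ^ 2 / 4 * Real.exp u + (max (v - u) 0) ^ 2 / 4 * Real.exp v := by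
  -- wlog u ≥ v
  have main : ∀ u v : ℝ, v ≤ u → Dent (Real.exp u) (Real.exp v)
      ≤ (u - v) ^ 2 / 4 * Real.exp u := by
    intro u v huv
    have hd : 0 ≤ u - v := by linarith
    have key := key_analytic hd
    have hident : Dent (Real.exp u) (Real.exp v)
        = Real.exp v * (((u - v) / 2) * Real.exp (u - v)
          - ((Real.exp (u - v) + 1) / 2) * Real.log ((Real.exp (u - v) + 1) / 2)) := by
      unfold Dent
      have he : Real.exp u = Real.exp v * Real.exp (u - v) := by
        rw [← Real.exp_add]; ring_nf
      have hlog : Real.log ((Real.exp u + Real.exp v) / 2)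
          = v + Real.log ((Real.exp (u - v) + 1) / 2) := by
        rw [he]
        have : Real.exp v * Real.exp (u - v) + Real.exp v
            = Real.exp v * (Real.exp (u - v) + 1) := by ring
        rw [this, mul_div_assoc, Real.log_mul (Real.exp_ne_zero v) (by positivity),
          Real.log_exp]
      rw [hlog, he, Real.log_mul (Real.exp_ne_zero v) (Real.exp_ne_zero (u-v)),
        Real.log_exp, Real.log_exp]
      ring
    rw [hident]
    calc Real.exp v * (((u - v) / 2) * Real.exp (u - v)
          - ((Real.exp (u - v) + 1) / 2) * Real.log ((Real.exp (u - v) + 1) / 2))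
        ≤ Real.exp v * (((u - v) ^ 2 / 4) * Real.exp (u - v)) := by
          apply mul_le_mul_of_nonneg_left key (Real.exp_nonneg v)
      _ = (u - v) ^ 2 / 4 * Real.exp u := by
          have he : Real.exp v * Real.exp (u - v) = Real.exp u := by
            rw [← Real.exp_add]; ring_nf
          rw [← he]; ring
  rcases le_total v u with h | h
  · have := main u v h
    have h1 : max (u - v) 0 = u - v := max_eq_left (by linarith)
    have h2 : max (v - u) 0 = 0 := max_eq_right (by linarith)
    rw [h1, h2]
    nlinarith [Real.exp_nonneg v, this]
  · have := main v u h
    rw [Dent_comm]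
    have h1 : max (v - u) 0 = v - u := max_eq_left (by linarith)
    have h2 : max (u - v) 0 = 0 := max_eq_right (by linarith)
    rw [h1, h2]
    nlinarith [Real.exp_nonneg u, this]

/-- flip the `i`-th coordinate -/
def bflip {n : ℕ} (i : Fin n) (x : Fin n → Bool) : Fin n → Bool :=
  Function.update x i (!(x i))

/-- unnormalized entropy w.r.t. the uniform measure on the cube -/
noncomputable def EntC (n : ℕ) (h : (Fin n → Bool) → ℝ) : ℝ :=
  (∑ x, h x * Real.log (h x)) - (∑ x, h x) * Real.log ((∑ x, h x) / 2 ^ n)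

lemma sum_cube_succ {n : ℕ} (F : (Fin (n+1) → Bool) → ℝ) :
    ∑ x, F x = ∑ y : Fin n → Bool, (F (Fin.cons true y) + F (Fin.cons false y)) := by
  rw [← Equiv.sum_comp (Fin.consEquiv (fun _ => Bool)) F, Fintype.sum_prod_type,
    Fintype.sum_bool]
  rw [← Finset.sum_add_distrib]
  rfl

lemma bflip_cons_zero {n : ℕ} (a : Bool) (y : Fin n → Bool) :
    bflip 0 (Fin.cons a y) = Fin.cons (!a) y := by
  unfold bflip
  rw [Fin.cons_zero, Fin.update_cons_zero]

lemma bflip_cons_succ {n : ℕ} (i : Fin n) (a : Bool) (y : Fin n → Bool) :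
    bflip i.succ (Fin.cons a y) = Fin.cons a (bflip i y) := by
  unfold bflip
  rw [Fin.cons_succ, Fin.cons_update]

theorem tensorization : ∀ (n : ℕ) (h : (Fin n → Bool) → ℝ), (∀ x, 0 < h x) →
    EntC n h ≤ ∑ i, ∑ x, Dent (h x) (h (bflip i x)) := by
  intro n
  induction n with
  | zero =>
    intro h hpos
    have : ∀ (f : (Fin 0 → Bool) → ℝ), ∑ x, f x = f (fun i => i.elim0) := by
      intro f
      apply Fintype.sum_eq_single
      intro x hx
      exact absurd (funext fun i => i.elim0) hx
    simp only [EntC, this, Finset.univ_eq_empty, Finset.sum_empty, pow_zero, div_one]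
    simp
  | succ n IH =>
    intro h hpos
    set ht : (Fin n → Bool) → ℝ := fun y => h (Fin.cons true y) with hht
    set hf : (Fin n → Bool) → ℝ := fun y => h (Fin.cons false y) with hhf
    set g : (Fin n → Bool) → ℝ := fun y => (ht y + hf y) / 2 with hg
    have hgpos : ∀ y, 0 < g y := fun y => by
      have := hpos (Fin.cons true y); have := hpos (Fin.cons false y)
      simp only [hg]; positivity
    -- Step 1 : decomposition identity
    have decomp : EntC (n+1) h
        = (∑ y : Fin n → Bool, 2 * Dent (ht y) (hf y)) + 2 * EntC n g := by
      unfold EntC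
      rw [sum_cube_succ (fun x => h x * Real.log (h x)), sum_cube_succ h]
      have e1 : ∑ y : Fin n → Bool, (ht y + hf y) = 2 * ∑ y, g y := by
        rw [Finset.mul_sum]
        apply Finset.sum_congr rfl
        intro y _
        simp only [hg]; ring
      have e2 : ∀ y, 2 * Dent (ht y) (hf y)
          = ht y * Real.log (ht y) + hf y * Real.log (hf y) - 2 * (g y * Real.log (g y)) := by
        intro y
        simp only [Dent, hg]
        ring
      have e3 : (2:ℝ) * ∑ y, g y ≠ 0 := by
        have : 0 < ∑ y : Fin n → Bool, g y :=
          Finset.sum_pos (fun y _ => hgpos y) Finset.univ_nonempty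
        positivity
      have e4 : Real.log (2 * (∑ y, g y) / 2 ^ (n+1))
          = Real.log ((∑ y, g y) / 2 ^ n) := by
        congr 1
        rw [pow_succ]
        field_simp
      rw [e1, e4]
      rw [Finset.sum_congr rfl (fun y _ => e2 y)]
      rw [Finset.sum_sub_distrib, ← Finset.mul_sum]
      ring
    rw [decomp]
    -- Step 2 : RHS decomposition
    rw [Fin.sum_univ_succ (fun i => ∑ x, Dent (h x) (h (bflip i x)))]
    have rhs0 : ∑ x, Dent (h x) (h (bflip 0 x)) = ∑ y : Fin n → Bool, 2 * Dent (ht y) (hf y) := by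
      rw [sum_cube_succ (fun x => Dent (h x) (h (bflip 0 x)))]
      apply Finset.sum_congr rfl
      intro y _
      rw [bflip_cons_zero, bflip_cons_zero]
      simp only [Bool.not_true, Bool.not_false]
      rw [Dent_comm (h (Fin.cons false y))]
      ring
    rw [rhs0]
    have rhsi : ∀ i : Fin n, ∑ y : Fin n → Bool, 2 * Dent (g y) (g (bflip i y))
        ≤ ∑ x, Dent (h x) (h (bflip i.succ x)) := by
      intro i
      rw [sum_cube_succ (fun x => Dent (h x) (h (bflip i.succ x)))]
      apply Finset.sum_le_sum
      intro y _
      rw [bflip_cons_succ, bflip_cons_succ]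
      have := Dent_midpoint (hpos (Fin.cons true y)) (hpos (Fin.cons false y))
        (hpos (Fin.cons true (bflip i y))) (hpos (Fin.cons false (bflip i y)))
      simp only [hg, hht, hhf]
      linarith
    have IH2 := IH g hgpos
    have step : 2 * EntC n g ≤ ∑ i : Fin n, ∑ x, Dent (h x) (h (bflip i.succ x)) := by
      calc 2 * EntC n g ≤ 2 * ∑ i, ∑ y, Dent (g y) (g (bflip i y)) := by linarith
        _ = ∑ i : Fin n, ∑ y : Fin n → Bool, 2 * Dent (g y) (g (bflip i y)) := by
            rw [Finset.mul_sum]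
            exact Finset.sum_congr rfl (fun i _ => by rw [Finset.mul_sum])
        _ ≤ _ := Finset.sum_le_sum (fun i _ => rhsi i)
    linarith

lemma bflip_involutive {n : ℕ} (i : Fin n) : Function.Involutive (bflip i) := by
  intro x
  unfold bflip
  rw [Function.update_self]
  rw [Function.update_idem]
  simp

/-- entropy bound for `exp (l • f)` under a one-sided discrete gradient bound -/
lemma entropy_exp_bound {n : ℕ} (f : (Fin n → Bool) → ℝ) (C : ℝ)
    (hgrad : ∀ x, ∑ i, (max (f x - f (bflip i x)) 0) ^ 2 ≤ C)
    (l : ℝ) (hl : 0 ≤ l) :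
    EntC n (fun x => Real.exp (l * f x)) ≤ C / 2 * l ^ 2 * ∑ x, Real.exp (l * f x) := by
  have step1 := tensorization n (fun x => Real.exp (l * f x)) (fun x => Real.exp_pos _)
  have step2 : ∀ (i : Fin n) (x : Fin n → Bool),
      Dent (Real.exp (l * f x)) (Real.exp (l * f (bflip i x)))
        ≤ l ^ 2 * (max (f x - f (bflip i x)) 0) ^ 2 / 4 * Real.exp (l * f x)
          + l ^ 2 * (max (f (bflip i x) - f x) 0) ^ 2 / 4 * Real.exp (l * f (bflip i x)) := by
    intro i x
    have := Dent_exp_le (l * f x) (l * f (bflip i x))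
    have e : ∀ a b : ℝ, (max (l * a - l * b) 0) ^ 2 = l ^ 2 * (max (a - b) 0) ^ 2 := by
      intro a b
      rw [show l * a - l * b = l * (a - b) by ring]
      rcases le_total (a - b) 0 with h | h
      · rw [max_eq_right (by nlinarith), max_eq_right h]
        ring
      · rw [max_eq_left (by positivity), max_eq_left h]
        ring
    rw [e, e] at this
    linarith
  have reindex : ∀ i : Fin n,
      ∑ x, l ^ 2 * (max (f (bflip i x) - f x) 0) ^ 2 / 4 * Real.exp (l * f (bflip i x))
      = ∑ x, l ^ 2 * (max (f x - f (bflip i x)) 0) ^ 2 / 4 * Real.exp (l * f x) := by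
    intro i
    have := Equiv.sum_comp (Function.Involutive.toPerm (bflip i) (bflip_involutive i))
      (fun x => l ^ 2 * (max (f x - f (bflip i x)) 0) ^ 2 / 4 * Real.exp (l * f x))
    rw [← this]
    apply Finset.sum_congr rfl
    intro x _
    simp only [Function.Involutive.coe_toPerm]
    rw [bflip_involutive i x]
  calc EntC n (fun x => Real.exp (l * f x))
      ≤ ∑ i, ∑ x, Dent (Real.exp (l * f x)) (Real.exp (l * f (bflip i x))) := step1
    _ ≤ ∑ i : Fin n, ∑ x, (l ^ 2 * (max (f x - f (bflip i x)) 0) ^ 2 / 4 * Real.exp (l * f x)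
          + l ^ 2 * (max (f (bflip i x) - f x) 0) ^ 2 / 4 * Real.exp (l * f (bflip i x))) := by
        apply Finset.sum_le_sum; intro i _
        apply Finset.sum_le_sum; intro x _
        exact step2 i x
    _ = ∑ i : Fin n, (2 : ℝ) * ∑ x, l ^ 2 * (max (f x - f (bflip i x)) 0) ^ 2 / 4 * Real.exp (l * f x) := by
        apply Finset.sum_congr rfl; intro i _
        rw [Finset.sum_add_distrib, reindex i]
        ring
    _ = ∑ x, (l ^ 2 / 2) * Real.exp (l * f x) * ∑ i, (max (f x - f (bflip i x)) 0) ^ 2 := by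
        have e1 : ∀ i : Fin n, (2:ℝ) * ∑ x, l ^ 2 * (max (f x - f (bflip i x)) 0) ^ 2 / 4 * Real.exp (l * f x)
            = ∑ x, (2:ℝ) * (l ^ 2 * (max (f x - f (bflip i x)) 0) ^ 2 / 4 * Real.exp (l * f x)) := by
          intro i; rw [Finset.mul_sum]
        rw [Finset.sum_congr rfl (fun i _ => e1 i), Finset.sum_comm]
        apply Finset.sum_congr rfl; intro x _
        rw [Finset.mul_sum]
        apply Finset.sum_congr rfl; intro i _
        ring
    _ ≤ ∑ x, (l ^ 2 / 2) * Real.exp (l * f x) * C := by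
        apply Finset.sum_le_sum; intro x _
        apply mul_le_mul_of_nonneg_left (hgrad x) (by positivity)
    _ = C / 2 * l ^ 2 * ∑ x, Real.exp (l * f x) := by
        rw [Finset.mul_sum]
        apply Finset.sum_congr rfl; intro x _
        ring

/-- Herbst argument: MGF bound -/
lemma herbst {n : ℕ} (f : (Fin n → Bool) → ℝ) (C : ℝ) (hC : 0 ≤ C)
    (hgrad : ∀ x, ∑ i, (max (f x - f (bflip i x)) 0) ^ 2 ≤ C)
    (μ : ℝ) (hmean : ∑ x, f x ≤ 2 ^ n * μ)
    (l : ℝ) (hl : 0 ≤ l) :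
    ∑ x, Real.exp (l * f x) ≤ 2 ^ n * Real.exp (l * μ + C / 2 * l ^ 2) := by
  set Sf : ℝ → ℝ := fun l => ∑ x, Real.exp (l * f x) with hSf
  have hSpos : ∀ l, 0 < Sf l :=
    fun l => Finset.sum_pos (fun x _ => Real.exp_pos _) Finset.univ_nonempty
  have hN : (0:ℝ) < 2 ^ n := by positivity
  have hSderiv : ∀ l, HasDerivAt Sf (∑ x, Real.exp (l * f x) * f x) l := by
    intro l
    apply HasDerivAt.fun_sum
    intro x _
    exact (hasDerivAt_mul_const (f x)).exp
  have hS0 : Sf 0 = 2 ^ n := by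
    simp only [hSf, zero_mul, Real.exp_zero]
    rw [Finset.sum_const, Finset.card_univ]
    simp [Fintype.card_fun]
  set Du : ℝ → ℝ := fun l => (∑ x, Real.exp (l * f x) * f x) / Sf l - μ - C * l with hDu
  set u : ℝ → ℝ := fun l => Real.log (Sf l) - Real.log (2 ^ n) - l * μ - C / 2 * l ^ 2 with hu
  have huderiv : ∀ l, HasDerivAt u (Du l) l := by
    intro l
    have h1 : HasDerivAt (fun l => Real.log (Sf l)) ((∑ x, Real.exp (l * f x) * f x) / Sf l) l :=
      (hSderiv l).log (hSpos l).ne'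
    have h2 : HasDerivAt (fun l : ℝ => l * μ) μ l := hasDerivAt_mul_const μ
    have h3 : HasDerivAt (fun l : ℝ => C / 2 * l ^ 2) (C * l) l := by
      have := (hasDerivAt_pow 2 l).const_mul (C / 2)
      refine this.congr_deriv ?_
      simp; ring
    exact ((h1.sub_const (Real.log (2 ^ n))).sub h2).sub h3
  have hu0 : u 0 = 0 := by simp [hu, hS0]
  -- key inequality  l * u' l - u l ≤ 0  for l ≥ 0
  have hkey : ∀ l, 0 ≤ l → l * Du l - u l ≤ 0 := by
    intro l hl
    have hent := entropy_exp_bound f C hgrad l hl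
    have hlog : Real.log (Sf l / 2 ^ n) = Real.log (Sf l) - Real.log (2 ^ n) :=
      Real.log_div (hSpos l).ne' hN.ne'
    have hEnt : EntC n (fun x => Real.exp (l * f x))
        = l * (∑ x, Real.exp (l * f x) * f x) - Sf l * Real.log (Sf l / 2 ^ n) := by
      unfold EntC
      congr 1
      rw [Finset.mul_sum]
      apply Finset.sum_congr rfl
      intro x _
      rw [Real.log_exp]
      ring
    rw [hEnt] at hent
    have hS := hSpos l
    have h1 : l * ((∑ x, Real.exp (l * f x) * f x) / Sf l) - Real.log (Sf l / 2 ^ n)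
        ≤ C / 2 * l ^ 2 := by
      rw [show l * ((∑ x, Real.exp (l * f x) * f x) / Sf l) - Real.log (Sf l / 2 ^ n)
          = (l * (∑ x, Real.exp (l * f x) * f x) - Sf l * Real.log (Sf l / 2 ^ n)) / Sf l by
        field_simp]
      rw [div_le_iff₀ hS]
      exact hent
    simp only [hu, hDu]
    rw [hlog] at h1
    nlinarith [h1]
  -- conclusion : u l ≤ 0 for l ≥ 0
  have hmain : ∀ l0, 0 ≤ l0 → u l0 ≤ 0 := by
    intro l0 hl0
    rcases eq_or_lt_of_le hl0 with h | h
    · rw [← h, hu0]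
    set w : ℝ → ℝ := fun l => u l * l⁻¹ with hw
    have hwderiv : ∀ l : ℝ, 0 < l → HasDerivAt w (Du l * l⁻¹ + u l * (-(l ^ 2)⁻¹)) l := by
      intro l hl
      exact (huderiv l).mul (hasDerivAt_inv hl.ne')
    have hanti : AntitoneOn w (Set.Ioi 0) := by
      apply antitoneOn_of_deriv_nonpos (convex_Ioi 0)
      · intro l hl
        exact ((hwderiv l hl).continuousAt).continuousWithinAt
      · intro l hl
        rw [interior_Ioi] at hl
        exact (hwderiv l hl).differentiableAt.differentiableWithinAt
      · intro l hl
        rw [interior_Ioi] at hl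
        rw [(hwderiv l hl).deriv]
        have hk := hkey l hl.le
        have he : ∀ a b : ℝ, a * l⁻¹ + b * (-(l ^ 2)⁻¹) = (l * a - b) / l ^ 2 := by
          intro a b
          have hl0 : l ≠ 0 := (ne_of_gt hl)
          field_simp
          ring
        have he2 := he (Du l) (u l)
        rw [he2]
        apply div_nonpos_of_nonpos_of_nonneg hk (by positivity)
    have hslope : Filter.Tendsto w (nhdsWithin 0 (Set.Ioi 0)) (nhds (Du 0)) := by
      have hd := huderiv 0
      rw [hasDerivAt_iff_tendsto_slope] at hd
      have hsub : Set.Ioi (0:ℝ) ⊆ {(0:ℝ)}ᶜ := by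
        intro x hx
        exact ne_of_gt hx
      have h2 := hd.mono_left (nhdsWithin_mono 0 hsub)
      apply h2.congr'
      filter_upwards [self_mem_nhdsWithin] with x hx
      rw [slope_def_field]
      simp only [hw, hu0, sub_zero]
      rw [div_eq_mul_inv]
    have hDu0 : Du 0 ≤ 0 := by
      simp only [hDu, zero_mul, Real.exp_zero, one_mul, mul_zero, sub_zero, hS0]
      rw [sub_nonpos, div_le_iff₀ hN]
      linarith [hmean]
    have hev : ∀ᶠ x in nhdsWithin 0 (Set.Ioi 0), w l0 ≤ w x := by
      filter_upwards [Ioc_mem_nhdsGT_of_mem (Set.mem_Ico.2 ⟨le_refl 0, h⟩)] with x hx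
      exact hanti hx.1 h hx.2
    have hwle : w l0 ≤ Du 0 := ge_of_tendsto hslope hev
    have : u l0 = w l0 * l0 := by
      simp only [hw]
      field_simp
    rw [this]
    have hwneg : w l0 ≤ 0 := le_trans hwle hDu0
    exact mul_nonpos_of_nonpos_of_nonneg hwneg hl0
  have := hmain l hl
  simp only [hu] at this
  have h2 : Real.log (Sf l) ≤ Real.log (2 ^ n) + l * μ + C / 2 * l ^ 2 := by linarith
  have h3 := Real.exp_le_exp.2 h2
  rw [Real.exp_log (hSpos l)] at h3
  calc Sf l ≤ Real.exp (Real.log (2 ^ n) + l * μ + C / 2 * l ^ 2) := h3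
    _ = 2 ^ n * Real.exp (l * μ + C / 2 * l ^ 2) := by
        rw [show Real.log ((2:ℝ) ^ n) + l * μ + C / 2 * l ^ 2
            = Real.log ((2:ℝ) ^ n) + (l * μ + C / 2 * l ^ 2) by ring,
          Real.exp_add, Real.exp_log hN]

lemma vnorm_nonneg {k : ℕ} (v : Fin k → ℝ) : 0 ≤ vnorm v := Real.sqrt_nonneg _

lemma vnorm_sq {k : ℕ} (v : Fin k → ℝ) : vnorm v ^ 2 = ∑ i, (v i) ^ 2 :=
  Real.sq_sqrt (Finset.sum_nonneg fun i _ => sq_nonneg _)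

lemma dot_le_vnorm_mul_vnorm {k : ℕ} (v w : Fin k → ℝ) :
    v ⬝ᵥ w ≤ vnorm v * vnorm w := by
  have h : (v ⬝ᵥ w) ^ 2 ≤ (vnorm v * vnorm w) ^ 2 := by
    rw [mul_pow, vnorm_sq, vnorm_sq]
    exact Finset.sum_mul_sq_le_sq_mul_sq univ v w
  calc v ⬝ᵥ w ≤ |v ⬝ᵥ w| := le_abs_self _
    _ = Real.sqrt ((v ⬝ᵥ w) ^ 2) := (Real.sqrt_sq_eq_abs _).symm
    _ ≤ Real.sqrt ((vnorm v * vnorm w) ^ 2) := Real.sqrt_le_sqrt h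
    _ = |vnorm v * vnorm w| := Real.sqrt_sq_eq_abs _
    _ = vnorm v * vnorm w := abs_of_nonneg (mul_nonneg (vnorm_nonneg v) (vnorm_nonneg w))

lemma spec_bound {m n : ℕ} (A : Matrix (Fin m) (Fin n) ℝ) (v : Fin n → ℝ) :
    vnorm (A.mulVec v) ≤ specNorm A * vnorm v := by
  set x : EuclideanSpace ℝ (Fin n) := (WithLp.equiv 2 _).symm v with hx
  have h1 : ‖x‖ = vnorm v := by
    rw [EuclideanSpace.norm_eq]
    unfold vnorm
    congr 1
    apply Finset.sum_congr rfl
    intro i _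
    rw [hx, WithLp.equiv_symm_apply, PiLp.toLp_apply]
    rw [Real.norm_eq_abs, sq_abs]
  have h2 : ‖(LinearMap.toContinuousLinearMap (Matrix.toEuclideanLin A)) x‖
      = vnorm (A.mulVec v) := by
    rw [LinearMap.coe_toContinuousLinearMap']
    rw [Matrix.toEuclideanLin_apply]
    rw [EuclideanSpace.norm_eq]
    unfold vnorm
    congr 1
    apply Finset.sum_congr rfl
    intro i _
    rw [PiLp.toLp_apply, Real.norm_eq_abs, sq_abs]
    rw [hx]
    rfl
  have := (LinearMap.toContinuousLinearMap (Matrix.toEuclideanLin A)).le_opNorm x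
  rw [h1, h2] at this
  exact this

lemma specNorm_nonneg {m n : ℕ} (A : Matrix (Fin m) (Fin n) ℝ) : 0 ≤ specNorm A :=
  norm_nonneg _

lemma dot_self_eq_vnorm_sq {k : ℕ} (v : Fin k → ℝ) : v ⬝ᵥ v = vnorm v ^ 2 := by
  rw [vnorm_sq]
  unfold dotProduct
  apply Finset.sum_congr rfl
  intro i _
  ring

lemma vnorm_transpose_mulVec_le {m n : ℕ} (A : Matrix (Fin m) (Fin n) ℝ) (a : Fin m → ℝ) :
    vnorm (Aᵀ.mulVec a) ≤ specNorm A * vnorm a := by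
  set g := Aᵀ.mulVec a with hgdef
  rcases eq_or_lt_of_le (vnorm_nonneg g) with h0 | hpos
  · rw [← h0]
    exact mul_nonneg (specNorm_nonneg A) (vnorm_nonneg a)
  · have h1 : vnorm g ^ 2 = a ⬝ᵥ (A.mulVec g) := by
      rw [← dot_self_eq_vnorm_sq, hgdef, Matrix.mulVec_transpose, ← Matrix.dotProduct_mulVec]
    have h2 : a ⬝ᵥ (A.mulVec g) ≤ vnorm a * (specNorm A * vnorm g) :=
      le_trans (dot_le_vnorm_mul_vnorm a (A.mulVec g))
        (mul_le_mul_of_nonneg_left (spec_bound A g) (vnorm_nonneg a))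
    nlinarith [hpos, h1, h2]

lemma signVec_bflip {n : ℕ} (s : Fin n → Bool) (i k : Fin n) :
    signVec (bflip i s) k = if k = i then -(signVec s k) else signVec s k := by
  unfold bflip signVec
  by_cases h : k = i
  · subst h
    rw [Function.update_self]
    cases s k <;> simp
  · rw [Function.update_of_ne h]
    simp [h]

lemma grad_bound {m n : ℕ} (A : Matrix (Fin m) (Fin n) ℝ) (s : Fin n → Bool) :
    ∑ i, (max (vnorm (A.mulVec (signVec s)) - vnorm (A.mulVec (signVec (bflip i s)))) 0) ^ 2
      ≤ 4 * specNorm A ^ 2 := by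
  set a := A.mulVec (signVec s) with ha
  rcases eq_or_lt_of_le (vnorm_nonneg a) with h0 | hpos
  · have : ∀ i : Fin n,
        (max (vnorm a - vnorm (A.mulVec (signVec (bflip i s)))) 0) ^ 2 = 0 := by
      intro i
      rw [max_eq_right (by nlinarith [vnorm_nonneg (A.mulVec (signVec (bflip i s)))])]
      ring
    rw [Finset.sum_congr rfl (fun i _ => this i)]
    rw [Finset.sum_const]
    simp
    positivity
  · set g := Aᵀ.mulVec a with hgdef
    have key : ∀ i : Fin n,
        (max (vnorm a - vnorm (A.mulVec (signVec (bflip i s)))) 0) ^ 2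
          ≤ 4 * g i ^ 2 / vnorm a ^ 2 := by
      intro i
      set b := A.mulVec (signVec (bflip i s)) with hb
      have hv : signVec s - signVec (bflip i s) = (fun k => if k = i then 2 * signVec s i else 0) := by
        funext k
        rw [Pi.sub_apply, signVec_bflip]
        by_cases h : k = i
        · subst h; simp; ring
        · simp [h]
      have hdiff : a - b = A.mulVec (fun k => if k = i then 2 * signVec s i else 0) := by
        rw [ha, hb, ← Matrix.mulVec_sub, hv]
      have hdot : a ⬝ᵥ (a - b) = 2 * signVec s i * g i := by
        rw [hdiff]
        rw [Matrix.dotProduct_mulVec]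
        unfold dotProduct
        rw [Finset.sum_eq_single i]
        · have : (a ᵥ* A) i = g i := by
            rw [hgdef, Matrix.mulVec_transpose]
          rw [this]
          simp
          ring
        · intro k _ hk
          simp [hk]
        · intro h
          exact absurd (Finset.mem_univ i) h
      have hub : vnorm a - vnorm b ≤ 2 * |g i| / vnorm a := by
        have h1 : (vnorm a - vnorm b) * vnorm a ≤ a ⬝ᵥ (a - b) := by
          rw [dotProduct_sub, dot_self_eq_vnorm_sq]
          nlinarith [dot_le_vnorm_mul_vnorm a b]
        have h2 : a ⬝ᵥ (a - b) ≤ 2 * |g i| := by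
          rw [hdot]
          have : signVec s i = 1 ∨ signVec s i = -1 := by
            unfold signVec; cases s i <;> simp
          rcases this with h | h <;> rw [h] <;>
            [skip; skip] <;> cases abs_cases (g i) <;> nlinarith [le_abs_self (g i), neg_abs_le (g i)]
        calc vnorm a - vnorm b ≤ a ⬝ᵥ (a - b) / vnorm a := (le_div_iff₀ hpos).2 h1
          _ ≤ 2 * |g i| / vnorm a := by gcongr
      have hrhs : (0:ℝ) ≤ 2 * |g i| / vnorm a := by positivity
      have hmax : max (vnorm a - vnorm b) 0 ≤ 2 * |g i| / vnorm a := max_le hub hrhs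
      calc (max (vnorm a - vnorm b) 0) ^ 2 ≤ (2 * |g i| / vnorm a) ^ 2 := by
            apply pow_le_pow_left₀ (le_max_right _ 0) hmax
        _ = 4 * g i ^ 2 / vnorm a ^ 2 := by
            rw [div_pow, mul_pow, sq_abs]; ring
    calc ∑ i, (max (vnorm a - vnorm (A.mulVec (signVec (bflip i s)))) 0) ^ 2
        ≤ ∑ i, 4 * g i ^ 2 / vnorm a ^ 2 := Finset.sum_le_sum (fun i _ => key i)
      _ = 4 * vnorm g ^ 2 / vnorm a ^ 2 := by
          have e : ∑ i, 4 * g i ^ 2 / vnorm a ^ 2 = 4 * (∑ i, g i ^ 2) / vnorm a ^ 2 := by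
            rw [Finset.mul_sum, Finset.sum_div]
          rw [e, ← vnorm_sq g]
      _ ≤ 4 * specNorm A ^ 2 := by
          have := vnorm_transpose_mulVec_le A a
          have h2 : vnorm g ^ 2 ≤ (specNorm A * vnorm a) ^ 2 :=
            pow_le_pow_left₀ (vnorm_nonneg g) this 2
          rw [div_le_iff₀ (by positivity)]
          nlinarith [specNorm_nonneg A, vnorm_nonneg a, h2]

lemma signVec_sq {n : ℕ} (s : Fin n → Bool) (k : Fin n) : signVec s k * signVec s k = 1 := by
  unfold signVec; cases s k <;> simp

lemma sum_sign_orth {n : ℕ} {k l : Fin n} (hkl : k ≠ l) :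
    ∑ s : Fin n → Bool, signVec s k * signVec s l = 0 := by
  set σ : (Fin n → Bool) → (Fin n → Bool) := fun s => Function.update s k (!(s k)) with hσ
  have hinv : Function.Involutive σ := by
    intro s
    simp only [hσ]
    rw [Function.update_self, Function.update_idem]
    simp
  have hneg : ∀ s, signVec (σ s) k * signVec (σ s) l = -(signVec s k * signVec s l) := by
    intro s
    have h1 : signVec (σ s) k = -(signVec s k) := by
      simp only [hσ, signVec, Function.update_self]
      cases s k <;> simp
    have h2 : signVec (σ s) l = signVec s l := by
      simp only [hσ, signVec, Function.update_of_ne (Ne.symm hkl)]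
    rw [h1, h2]; ring
  have := Equiv.sum_comp (Function.Involutive.toPerm σ hinv)
    (fun s => signVec s k * signVec s l)
  have h2 : ∑ s : Fin n → Bool, signVec (σ s) k * signVec (σ s) l
      = -∑ s : Fin n → Bool, signVec s k * signVec s l := by
    rw [Finset.sum_congr rfl (fun s _ => hneg s), Finset.sum_neg_distrib]
  simp only [Function.Involutive.coe_toPerm] at this
  rw [h2] at this
  linarith [this]

lemma card_cube (n : ℕ) : (Finset.univ : Finset (Fin n → Bool)).card = 2 ^ n := by
  rw [Finset.card_univ]
  simp [Fintype.card_fun]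

lemma sum_f_sq {m n : ℕ} (A : Matrix (Fin m) (Fin n) ℝ) :
    ∑ s : Fin n → Bool, vnorm (A.mulVec (signVec s)) ^ 2 = 2 ^ n * frobNorm A ^ 2 := by
  have step1 : ∀ s : Fin n → Bool, vnorm (A.mulVec (signVec s)) ^ 2
      = ∑ r, ∑ k, ∑ l, (A r k * A r l) * (signVec s k * signVec s l) := by
    intro s
    rw [vnorm_sq]
    apply Finset.sum_congr rfl
    intro r _
    rw [show (A.mulVec (signVec s)) r = ∑ k, A r k * signVec s k from rfl, sq,
      Finset.sum_mul_sum]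
    apply Finset.sum_congr rfl; intro k _
    apply Finset.sum_congr rfl; intro l _
    ring
  rw [Finset.sum_congr rfl (fun s _ => step1 s)]
  rw [Finset.sum_comm]
  have step2 : ∀ r : Fin m, ∑ s : Fin n → Bool, ∑ k, ∑ l, (A r k * A r l) * (signVec s k * signVec s l)
      = 2 ^ n * ∑ k, (A r k) ^ 2 := by
    intro r
    rw [Finset.sum_comm]
    have inner : ∀ k : Fin n, ∑ s : Fin n → Bool, ∑ l, (A r k * A r l) * (signVec s k * signVec s l)
        = 2 ^ n * (A r k) ^ 2 := by
      intro k
      rw [Finset.sum_comm]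
      have e : ∀ l : Fin n, ∑ s : Fin n → Bool, (A r k * A r l) * (signVec s k * signVec s l)
          = if l = k then 2 ^ n * (A r k) ^ 2 else 0 := by
        intro l
        by_cases h : l = k
        · subst h
          rw [if_pos rfl]
          have : ∀ s : Fin n → Bool, (A r l * A r l) * (signVec s l * signVec s l)
              = (A r l) ^ 2 := by
            intro s; rw [signVec_sq]; ring
          rw [Finset.sum_congr rfl (fun s _ => this s), Finset.sum_const, card_cube]
          simp [mul_comm]
        · rw [if_neg h, ← Finset.mul_sum, sum_sign_orth (fun hc => h hc.symm)]
          ring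
      rw [Finset.sum_congr rfl (fun l _ => e l)]
      rw [Finset.sum_ite_eq' univ k (fun _ => 2 ^ n * (A r k) ^ 2)]
      simp
    rw [Finset.sum_congr rfl (fun k _ => inner k), ← Finset.mul_sum]
  rw [Finset.sum_congr rfl (fun r _ => step2 r), ← Finset.mul_sum]
  unfold frobNorm
  rw [Real.sq_sqrt (by positivity)]

lemma mean_bound {m n : ℕ} (A : Matrix (Fin m) (Fin n) ℝ) :
    ∑ s : Fin n → Bool, vnorm (A.mulVec (signVec s)) ≤ 2 ^ n * frobNorm A := by
  have h1 : (∑ s : Fin n → Bool, vnorm (A.mulVec (signVec s))) ^ 2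
      ≤ 2 ^ n * ∑ s : Fin n → Bool, vnorm (A.mulVec (signVec s)) ^ 2 := by
    have := sq_sum_le_card_mul_sum_sq (s := (Finset.univ : Finset (Fin n → Bool)))
      (f := fun s => vnorm (A.mulVec (signVec s)))
    rw [card_cube] at this
    calc (∑ s : Fin n → Bool, vnorm (A.mulVec (signVec s))) ^ 2
        ≤ ((2:ℕ) ^ n : ℕ) * ∑ s : Fin n → Bool, vnorm (A.mulVec (signVec s)) ^ 2 := by
          exact_mod_cast this
      _ = 2 ^ n * ∑ s : Fin n → Bool, vnorm (A.mulVec (signVec s)) ^ 2 := by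
          norm_num
  rw [sum_f_sq] at h1
  have hsum : 0 ≤ ∑ s : Fin n → Bool, vnorm (A.mulVec (signVec s)) :=
    Finset.sum_nonneg fun s _ => vnorm_nonneg _
  have hrhs : (0:ℝ) ≤ 2 ^ n * frobNorm A := by
    have : (0:ℝ) ≤ frobNorm A := Real.sqrt_nonneg _
    positivity
  nlinarith [h1, hsum, hrhs]

lemma frobNorm_nonneg {m n : ℕ} (A : Matrix (Fin m) (Fin n) ℝ) : 0 ≤ frobNorm A :=
  Real.sqrt_nonneg _

open Classical in
/-- core concentration count -/
lemma core_count {m n : ℕ} (A : Matrix (Fin m) (Fin n) ℝ) (t : ℝ) (ht : 0 ≤ t) :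
    ((Finset.univ.filter fun s : Fin n → Bool =>
        frobNorm A + t * specNorm A < vnorm (A.mulVec (signVec s))).card : ℝ)
      ≤ Real.exp (-t ^ 2 / 8) * 2 ^ n := by
  set S := specNorm A with hS
  set F := frobNorm A with hF
  set f : (Fin n → Bool) → ℝ := fun s => vnorm (A.mulVec (signVec s)) with hf
  rcases eq_or_lt_of_le (specNorm_nonneg A) with h0 | hpos
  · -- S = 0 : no bad points
    have hzero : ∀ s : Fin n → Bool, ¬ (F + t * S < f s) := by
      intro s hcon
      have h1 : f s ≤ S * vnorm (signVec s) := spec_bound A (signVec s)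
      have h2 : S = 0 := h0.symm
      rw [h2] at h1
      have := frobNorm_nonneg A
      rw [h2] at hcon
      simp at h1 hcon
      nlinarith [hcon, h1, this]
    rw [Finset.filter_false_of_mem (fun s _ => hzero s)]
    simp
    positivity
  · set l := t / (4 * S) with hl
    have hlnn : 0 ≤ l := by positivity
    have hmgf := herbst f (4 * S ^ 2) (by positivity) (fun s => grad_bound A s)
      F (mean_bound A) l hlnn
    set bad := Finset.univ.filter fun s : Fin n → Bool => F + t * S < f s with hbad
    have hE : (0:ℝ) < Real.exp (l * (F + t * S)) := Real.exp_pos _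
    have hcard : (bad.card : ℝ) * Real.exp (l * (F + t * S)) ≤
        2 ^ n * Real.exp (l * F + (4 * S ^ 2) / 2 * l ^ 2) := by
      calc (bad.card : ℝ) * Real.exp (l * (F + t * S))
          ≤ ∑ s ∈ bad, Real.exp (l * f s) := by
            have hb : ∀ s ∈ bad, Real.exp (l * (F + t * S)) ≤ Real.exp (l * f s) := by
              intro s hs
              have := (Finset.mem_filter.1 hs).2
              exact Real.exp_le_exp.2 (mul_le_mul_of_nonneg_left this.le hlnn)
            have := Finset.card_nsmul_le_sum bad (fun s => Real.exp (l * f s))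
              (Real.exp (l * (F + t * S))) hb
            simpa [nsmul_eq_mul] using this
        _ ≤ ∑ s, Real.exp (l * f s) :=
            Finset.sum_le_sum_of_subset_of_nonneg (Finset.filter_subset _ _)
              (fun s _ _ => (Real.exp_pos _).le)
        _ ≤ 2 ^ n * Real.exp (l * F + (4 * S ^ 2) / 2 * l ^ 2) := hmgf
    have hfinal : (bad.card : ℝ) ≤
        2 ^ n * Real.exp (l * F + (4 * S ^ 2) / 2 * l ^ 2) / Real.exp (l * (F + t * S)) := by
      rw [le_div_iff₀ hE]
      exact hcard
    calc (bad.card : ℝ)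
        ≤ 2 ^ n * Real.exp (l * F + (4 * S ^ 2) / 2 * l ^ 2) / Real.exp (l * (F + t * S)) := hfinal
      _ = 2 ^ n * Real.exp ((l * F + (4 * S ^ 2) / 2 * l ^ 2) - l * (F + t * S)) := by
          rw [Real.exp_sub, mul_div_assoc]
      _ = Real.exp (-t ^ 2 / 8) * 2 ^ n := by
          have he : (l * F + (4 * S ^ 2) / 2 * l ^ 2) - l * (F + t * S) = -t ^ 2 / 8 := by
            rw [hl]
            have hS0 : S ≠ 0 := ne_of_gt hpos
            field_simp
            ring
          rw [he]
          ring

lemma vnorm_const_mul {k : ℕ} (c : ℝ) (v : Fin k → ℝ) :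
    vnorm (fun i => c * v i) = |c| * vnorm v := by
  unfold vnorm
  rw [← Real.sqrt_sq_eq_abs, ← Real.sqrt_mul (sq_nonneg c), Finset.mul_sum]
  congr 1
  apply Finset.sum_congr rfl
  intro i _
  ring


end SRHTProof

/-- SRHT equalization of column norms: for a normalized Hadamard matrix `H` and a
uniformly random vector of independent signs `D = diag(±1)`, with probability at
least `1 − n e^{−t²/8}` every column of `A D Hᵀ` has norm at most
`n^{−1/2}‖A‖_F + t n^{−1/2}‖A‖₂`.  (Probability over the `2^n` sign vectors.) -/
theorem srht_equalizes_column_norms {m n : ℕ} (A : Matrix (Fin m) (Fin n) ℝ)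
    (H : Matrix (Fin n) (Fin n) ℝ) (hH : H * Hᵀ = 1)
    (hHent : ∀ i j, H i j = (Real.sqrt n)⁻¹ ∨ H i j = -(Real.sqrt n)⁻¹)
    (t : ℝ) (ht : 0 ≤ t) :
    (1 - (n : ℝ) * Real.exp (-t ^ 2 / 8)) * 2 ^ n ≤
      (Nat.card {s : Fin n → Bool //
        ∀ j, vnorm (fun i => (A * Matrix.diagonal (signVec s) * Hᵀ) i j) ≤
          (Real.sqrt n)⁻¹ * frobNorm A + t * (Real.sqrt n)⁻¹ * specNorm A} : ℝ) := by
  classical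
  set F := frobNorm A with hF
  set S := specNorm A with hS
  set bound := (Real.sqrt n)⁻¹ * F + t * (Real.sqrt n)⁻¹ * S with hbound
  set P : (Fin n → Bool) → Prop := fun s =>
    ∀ j, vnorm (fun i => (A * Matrix.diagonal (signVec s) * Hᵀ) i j) ≤ bound with hP
  -- column entries
  have hentry : ∀ (s : Fin n → Bool) (j : Fin n),
      (fun i => (A * Matrix.diagonal (signVec s) * Hᵀ) i j)
        = A.mulVec (fun k => signVec s k * H j k) := by
    intro s j
    funext i
    rw [Matrix.mul_assoc, Matrix.mul_apply]
    rw [Matrix.mulVec]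
    apply Finset.sum_congr rfl
    intro k _
    rw [Matrix.diagonal_mul, Matrix.transpose_apply]
  -- cardinality bookkeeping
  have hNatcard : (Nat.card {s : Fin n → Bool // P s} : ℝ)
      = ((Finset.univ.filter P).card : ℝ) := by
    rw [Nat.card_eq_fintype_card, Fintype.card_subtype]
  rw [hNatcard]
  have hsplit : (Finset.univ.filter P).card + (Finset.univ.filter (fun s => ¬ P s)).card
      = 2 ^ n := by
    rw [Finset.card_filter_add_card_filter_not, card_cube]
  -- bound the bad set by a union
  have hbadj : ∀ j : Fin n,
      ((Finset.univ.filter (fun s : Fin n → Bool =>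
        ¬ vnorm (fun i => (A * Matrix.diagonal (signVec s) * Hᵀ) i j) ≤ bound)).card : ℝ)
        ≤ Real.exp (-t ^ 2 / 8) * 2 ^ n := by
    intro j
    have hn : (0:ℝ) < Real.sqrt n := by
      apply Real.sqrt_pos.2
      exact_mod_cast j.pos
    set c : ℝ := (Real.sqrt n)⁻¹ with hc
    have hcpos : 0 < c := by positivity
    set b : Fin n → Bool := fun k => if H j k = c then true else false with hb
    have hsign : ∀ k, H j k = c * signVec b k := by
      intro k
      rcases hHent j k with h | h
      · rw [h]
        simp only [hb, signVec, h, if_pos rfl]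
        simp
      · have hne : H j k ≠ c := by
          rw [h]
          intro hcon
          have : (2:ℝ) * c = 0 := by linarith [hcon]
          have := hcpos
          nlinarith
        rw [h]
        simp only [hb, signVec, if_neg hne]
        simp
    -- rewrite the column norm
    have hcol : ∀ s : Fin n → Bool,
        vnorm (fun i => (A * Matrix.diagonal (signVec s) * Hᵀ) i j)
          = c * vnorm (A.mulVec (signVec (fun k => s k == b k))) := by
      intro s
      rw [hentry s j]
      have hw : (fun k => signVec s k * H j k)
          = fun k => c * signVec (fun k => s k == b k) k := by
        funext k
        rw [hsign k]
        have hxy : ∀ x y : Bool, ((if x = true then (1:ℝ) else -1) * if y = true then 1 else -1)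
            = if (x == y) = true then 1 else -1 := by
          intro x y; cases x <;> cases y <;> simp
        have : signVec s k * signVec b k = signVec (fun k => s k == b k) k := by
          simp only [signVec]
          exact hxy (s k) (b k)
        rw [← this]
        ring
      rw [hw]
      have : A.mulVec (fun k => c * signVec (fun k => s k == b k) k)
          = fun i => c * (A.mulVec (signVec (fun k => s k == b k))) i := by
        funext i
        rw [show (fun k => c * signVec (fun k => s k == b k) k)
            = c • (signVec (fun k => s k == b k)) from rfl]
        rw [Matrix.mulVec_smul]
        simp
      rw [this, vnorm_const_mul, abs_of_pos hcpos]
    have hboundc : bound = c * (F + t * S) := by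
      rw [hbound, hc]; ring
    -- condition equivalence
    have hcond : ∀ s : Fin n → Bool,
        (¬ vnorm (fun i => (A * Matrix.diagonal (signVec s) * Hᵀ) i j) ≤ bound)
          ↔ F + t * S < vnorm (A.mulVec (signVec (fun k => s k == b k))) := by
      intro s
      rw [not_le, hcol s, hboundc]
      exact mul_lt_mul_iff_right₀ hcpos
    -- bijection with the core bad set
    have hcardeq : (Finset.univ.filter (fun s : Fin n → Bool =>
        ¬ vnorm (fun i => (A * Matrix.diagonal (signVec s) * Hᵀ) i j) ≤ bound)).card
        = (Finset.univ.filter (fun u : Fin n → Bool =>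
            F + t * S < vnorm (A.mulVec (signVec u)))).card := by
      apply Finset.card_bij' (fun s _ => fun k => s k == b k) (fun u _ => fun k => u k == b k)
      · intro s hs
        rw [Finset.mem_filter] at hs ⊢
        exact ⟨Finset.mem_univ _, (hcond s).1 hs.2⟩
      · intro u hu
        rw [Finset.mem_filter] at hu ⊢
        refine ⟨Finset.mem_univ _, ?_⟩
        rw [hcond]
        have : (fun k => (u k == b k) == b k) = u := by
          funext k
          cases hu : u k <;> cases hb2 : b k <;> simp [hu, hb2]
        rw [this]
        exact hu.2
      · intro s _
        funext k
        cases hs : s k <;> cases hb2 : b k <;> simp [hs, hb2]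
      · intro u _
        funext k
        cases hu : u k <;> cases hb2 : b k <;> simp [hu, hb2]
    rw [hcardeq]
    exact core_count A t ht
  -- union bound
  have hsub : Finset.univ.filter (fun s => ¬ P s) ⊆
      Finset.univ.biUnion (fun j : Fin n => Finset.univ.filter (fun s : Fin n → Bool =>
        ¬ vnorm (fun i => (A * Matrix.diagonal (signVec s) * Hᵀ) i j) ≤ bound)) := by
    intro s hs
    rw [Finset.mem_filter] at hs
    have hs2 : ¬ ∀ j, vnorm (fun i => (A * Matrix.diagonal (signVec s) * Hᵀ) i j) ≤ bound := hs.2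
    push_neg at hs2
    obtain ⟨j, hj⟩ := hs2
    apply Finset.mem_biUnion.2
    exact ⟨j, Finset.mem_univ j, Finset.mem_filter.2 ⟨Finset.mem_univ s, not_le.2 hj⟩⟩
  have hcount : ((Finset.univ.filter (fun s => ¬ P s)).card : ℝ)
      ≤ (n : ℝ) * (Real.exp (-t ^ 2 / 8) * 2 ^ n) := by
    calc ((Finset.univ.filter (fun s => ¬ P s)).card : ℝ)
        ≤ ((Finset.univ.biUnion (fun j : Fin n => Finset.univ.filter (fun s : Fin n → Bool =>
            ¬ vnorm (fun i => (A * Matrix.diagonal (signVec s) * Hᵀ) i j) ≤ bound))).card : ℝ) := by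
          exact_mod_cast Finset.card_le_card hsub
      _ ≤ ∑ j : Fin n, ((Finset.univ.filter (fun s : Fin n → Bool =>
            ¬ vnorm (fun i => (A * Matrix.diagonal (signVec s) * Hᵀ) i j) ≤ bound)).card : ℝ) := by
          have := Finset.card_biUnion_le (s := (Finset.univ : Finset (Fin n)))
            (t := fun j => Finset.univ.filter (fun s : Fin n → Bool =>
              ¬ vnorm (fun i => (A * Matrix.diagonal (signVec s) * Hᵀ) i j) ≤ bound))
          exact_mod_cast this
      _ ≤ ∑ j : Fin n, Real.exp (-t ^ 2 / 8) * 2 ^ n :=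
          Finset.sum_le_sum (fun j _ => hbadj j)
      _ = (n : ℝ) * (Real.exp (-t ^ 2 / 8) * 2 ^ n) := by
          rw [Finset.sum_const, Finset.card_univ, Fintype.card_fin, nsmul_eq_mul]
  -- finish
  have hcast : ((Finset.univ.filter P).card : ℝ)
      + ((Finset.univ.filter (fun s => ¬ P s)).card : ℝ) = 2 ^ n := by
    exact_mod_cast hsplit
  nlinarith [hcount, hcast]
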